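/- Fix p ∈ {0,…,h̄−1}, let S = S_{⌊p/(h̄−δ+1)⌋} be the group of host racks containing i_p, assume u − v + 1 ≤ b ≤ u and d̄ + 1 ≤ n̄ − h̄, and let R' ⊆ {0,…,n̄−1}∖F with |R'| = d̄ + 1. Let c and c' be two codewords such that H_{i_p,j}(a,m)[c] = H_{i_p,j}(a,m)[c'] for every j ∈ R', every m ∈ {u−v,…,b−1}, and every a ∈ 𝔽₂^{n̄} with a|_S ∈ V₀. Then for every m ∈ {u−v,…,b−1} and every a ∈ 𝔽₂^{n̄} with a|_S ∈ V₀: (i) ∑_{g=0}^{u−1} θ^{g·m}·c(i_p·u+g, a) = ∑_{g=0}^{u−1} θ^{g·m}·c'(i_p·u+g, a) and ∑_{g=0}^{u−1} θ^{g·m}·c(i_p·u+g, a+e_{i_p}) = ∑_{g=0}^{u−1} θ^{g·m}·c'(i_p·u+g, a+e_{i_p}); and (ii) H_{i_p,i}(a,m)[c] = H_{i_p,i}(a,m)[c'] for every i ∈ F∖{i_p}. -/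

import Mathlib

open Matrix in
lemma vandFin_zero {𝔽 : Type*} [Field 𝔽] {N : ℕ} (x : Fin N → 𝔽) (hx : Function.Injective x)
    (w : Fin N → 𝔽) (h : ∀ s : Fin N, ∑ i, x i ^ (s : ℕ) * w i = 0) : w = 0 := by
  have hdet : IsUnit ((Matrix.vandermonde x).transpose).det := by
    rw [Matrix.det_transpose]
    exact (Matrix.det_vandermonde_ne_zero_iff.mpr hx).isUnit
  have hinj := Matrix.mulVec_injective_iff_isUnit.mpr ((Matrix.isUnit_iff_isUnit_det _).mpr hdet)
  have h0 : (Matrix.vandermonde x).transpose.mulVec w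
      = (Matrix.vandermonde x).transpose.mulVec 0 := by
    funext s
    rw [Matrix.mulVec_zero]
    simpa [Matrix.mulVec, Matrix.vandermonde, dotProduct] using h s
  exact hinj h0

lemma vand_zero_finset {𝔽 : Type*} [Field 𝔽] (E : Finset ℕ) (x w : ℕ → 𝔽)
    (hx : Set.InjOn x E)
    (h : ∀ s < E.card, ∑ j ∈ E, x j ^ s * w j = 0) : ∀ j ∈ E, w j = 0 := by
  classical
  set e := E.equivFin with he
  have key : (fun i : Fin E.card => w (e.symm i)) = 0 := by
    apply vandFin_zero (fun i => x (e.symm i))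
    · intro i1 i2 hi
      have hm : (x ((e.symm i1) : ℕ) = x ((e.symm i2) : ℕ)) := hi
      have := hx (e.symm i1).2 (e.symm i2).2 hm
      exact e.symm.injective (Subtype.ext this)
    · intro s
      calc ∑ i : Fin E.card, x (e.symm i) ^ (s : ℕ) * w (e.symm i)
          = ∑ j : E, x (j : ℕ) ^ (s : ℕ) * w (j : ℕ) :=
            Equiv.sum_comp e.symm (fun j : E => x (j : ℕ) ^ (s : ℕ) * w (j : ℕ))
        _ = ∑ j ∈ E, x j ^ (s : ℕ) * w j := Finset.sum_coe_sort E (fun j => x j ^ (s : ℕ) * w j)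
        _ = 0 := h s s.2
  intro j hj
  have := congrFun key (e ⟨j, hj⟩)
  simpa using this



/-- Flip the `i`-th coordinate of a binary vector (the paper's `a + e_i`). -/
def flipCoord (a : ℕ → ZMod 2) (i : ℕ) : ℕ → ZMod 2 :=
  Function.update a i (a i + 1)

/-- The combined symbol `H_{i',j'}(a,m)[c]` of the second construction:
`∑_{g=0}^{u−1} θ^{g·m}·c(j'·u+g, a) + ∑_{g=0}^{u−1} θ^{g·m}·c(j'·u+g, a+e_{i'})`. -/
def Hval2 {𝔽 : Type*} [Field 𝔽] (θ : 𝔽) (u i' j' m : ℕ)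
    (c : ℕ → (ℕ → ZMod 2) → 𝔽) (a : ℕ → ZMod 2) : 𝔽 :=
  (∑ g ∈ Finset.range u, θ ^ (g * m) * c (j' * u + g) a)
    + ∑ g ∈ Finset.range u, θ ^ (g * m) * c (j' * u + g) (flipCoord a i')

/-- **Lemma 5(2) of the paper** (download phase of the second construction,
`dbar = kbar + 1`, regime `u − v + 1 ≤ b ≤ u`, using an enlarged set `R'` of
`dbar + 1` helper racks, here named `R`): if two codewords `c, c'` give the same
downloaded symbols `H_{i_p,j}(a,m)` for all `j ∈ R'`, all `m ∈ {u−v, …, b−1}` and all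
`a` whose restriction to the group `S = S_{⌊p/(hbar−δ+1)⌋}` of host racks containing
`i_p` (in increasing order) lies in the Hamming code `V₀`, then they agree on (i) the
combinations `∑_g θ^{g·m}·c(i_p·u+g, a)` and `∑_g θ^{g·m}·c(i_p·u+g, a+e_{i_p})`, and
(ii) the symbols `H_{i_p,i}(a,m)` for every other host rack `i ∈ F∖{i_p}`, for all
such `a` and all `m ∈ {u−v, …, b−1}`. -/
theorem stmt16 {𝔽 : Type*} [Field 𝔽] [Fintype 𝔽]
    (nbar u kbar hbar dbar δ v b mbar : ℕ)
    (hnbar : 0 < nbar) (hu : 0 < u) (hkbar : 0 < kbar) (hhbar : 0 < hbar)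
    (hδ1 : 1 ≤ δ) (hδ2 : δ ≤ hbar - 1)
    (hv : v < u) (hb1 : u - v + 1 ≤ b) (hb2 : b ≤ u)
    (hmbar : hbar - δ + 2 = 2 ^ mbar) (hdvdh : (hbar - δ + 1) ∣ hbar)
    (hdbar : dbar = kbar + 1) (hd2 : dbar + 1 ≤ nbar - hbar) (hhn : hbar ≤ nbar)
    (k n r : ℕ)
    (hk : k = kbar * u + v) (hn : n = nbar * u) (hr : r = n - k)
    (hcard : 2 * n + 1 ≤ Fintype.card 𝔽) (hdvd : u ∣ Fintype.card 𝔽 - 1)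
    (ξ θ : 𝔽) (hξ : orderOf ξ = Fintype.card 𝔽 - 1) (hθ : orderOf θ = u)
    -- the host racks `i₀ < i₁ < … < i_{hbar−1}`, given by `iF 0, …, iF (hbar−1)`
    (iF : ℕ → ℕ) (hiF : StrictMonoOn iF (Set.Iio hbar)) (hiFn : ∀ q < hbar, iF q < nbar)
    -- the helper racks
    (R : Finset ℕ) (hR : R.card = dbar + 1) (hRn : ∀ j ∈ R, j < nbar)
    (hRF : ∀ j ∈ R, ∀ q < hbar, j ≠ iF q)
    -- the Hamming code `V₀ ⊆ 𝔽₂^{hbar−δ+1}`: kernel of a matrix whose columns are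
    -- the distinct nonzero vectors of `𝔽₂^{mbar}`
    (Hm : Matrix (Fin mbar) (Fin (hbar - δ + 1)) (ZMod 2))
    (hHminj : Function.Injective fun j i => Hm i j)
    (hHmnz : ∀ j, (fun i => Hm i j) ≠ 0)
    (V₀ : Set (Fin (hbar - δ + 1) → ZMod 2)) (hV₀ : V₀ = {f | Hm.mulVec f = 0})
    -- two codewords of the MDS array code
    (c c' : ℕ → (ℕ → ZMod 2) → 𝔽)
    (hc : ∀ t < r, ∀ a : ℕ → ZMod 2,
      ∑ i ∈ Finset.range nbar, ∑ g ∈ Finset.range u,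
        θ ^ (g * t) * (ξ ^ (2 * i + (a i).val)) ^ t * c (i * u + g) a = 0)
    (hc' : ∀ t < r, ∀ a : ℕ → ZMod 2,
      ∑ i ∈ Finset.range nbar, ∑ g ∈ Finset.range u,
        θ ^ (g * t) * (ξ ^ (2 * i + (a i).val)) ^ t * c' (i * u + g) a = 0)
    (p : ℕ) (hp : p < hbar)
    -- the downloaded symbols agree
    (hH : ∀ j ∈ R, ∀ m, u - v ≤ m → m < b → ∀ a : ℕ → ZMod 2,
      (fun t : Fin (hbar - δ + 1) =>
        a (iF (p / (hbar - δ + 1) * (hbar - δ + 1) + (t : ℕ)))) ∈ V₀ →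
      Hval2 θ u (iF p) j m c a = Hval2 θ u (iF p) j m c' a) :
    (∀ m, u - v ≤ m → m < b → ∀ a : ℕ → ZMod 2,
      (fun t : Fin (hbar - δ + 1) =>
        a (iF (p / (hbar - δ + 1) * (hbar - δ + 1) + (t : ℕ)))) ∈ V₀ →
      (∑ g ∈ Finset.range u, θ ^ (g * m) * c (iF p * u + g) a
          = ∑ g ∈ Finset.range u, θ ^ (g * m) * c' (iF p * u + g) a)
      ∧ (∑ g ∈ Finset.range u, θ ^ (g * m) * c (iF p * u + g) (flipCoord a (iF p))
          = ∑ g ∈ Finset.range u, θ ^ (g * m) * c' (iF p * u + g) (flipCoord a (iF p))))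
    ∧ (∀ q < hbar, q ≠ p → ∀ m, u - v ≤ m → m < b → ∀ a : ℕ → ZMod 2,
      (fun t : Fin (hbar - δ + 1) =>
        a (iF (p / (hbar - δ + 1) * (hbar - δ + 1) + (t : ℕ)))) ∈ V₀ →
      Hval2 θ u (iF p) (iF q) m c a = Hval2 θ u (iF p) (iF q) m c' a) := by
  classical
  have hipn : iF p < nbar := hiFn p hp
  have hmem : iF p ∈ Finset.range nbar := Finset.mem_range.mpr hipn
  have hRip : iF p ∉ R := fun h => hRF (iF p) h p hp rfl
  have hθu : θ ^ u = 1 := by rw [← hθ]; exact pow_orderOf_eq_one θ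
  have hn1 : 1 ≤ n := by rw [hn]; exact Nat.one_le_iff_ne_zero.mpr (Nat.mul_ne_zero hnbar.ne' hu.ne')
  have hξne : ξ ≠ 0 := by
    intro h0
    have h1 := pow_orderOf_eq_one ξ
    rw [hξ, h0, zero_pow (by omega : Fintype.card 𝔽 - 1 ≠ 0)] at h1
    exact one_ne_zero h1.symm
  have hval : ∀ x : ZMod 2, x.val ≤ 1 := by decide
  have hval1 : ∀ x : ZMod 2, (x + 1).val = 1 - x.val := by decide
  have hnbar3 : kbar + 3 ≤ nbar := by omega
  -- parity checks for the difference codeword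
  have hpar : ∀ t < r, ∀ a : ℕ → ZMod 2,
      ∑ i ∈ Finset.range nbar, (ξ ^ (2 * i + (a i).val)) ^ t *
        ∑ g ∈ Finset.range u, θ ^ (g * t) * (c (i * u + g) a - c' (i * u + g) a) = 0 := by
    intro t ht a
    have h1 := hc t ht a
    have h2 := hc' t ht a
    have key : ∑ i ∈ Finset.range nbar, (ξ ^ (2 * i + (a i).val)) ^ t *
        ∑ g ∈ Finset.range u, θ ^ (g * t) * (c (i * u + g) a - c' (i * u + g) a)
        = (∑ i ∈ Finset.range nbar, ∑ g ∈ Finset.range u,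
            θ ^ (g * t) * (ξ ^ (2 * i + (a i).val)) ^ t * c (i * u + g) a)
          - ∑ i ∈ Finset.range nbar, ∑ g ∈ Finset.range u,
            θ ^ (g * t) * (ξ ^ (2 * i + (a i).val)) ^ t * c' (i * u + g) a := by
      rw [← Finset.sum_sub_distrib]
      refine Finset.sum_congr rfl fun i _ => ?_
      rw [Finset.mul_sum, ← Finset.sum_sub_distrib]
      refine Finset.sum_congr rfl fun g _ => ?_
      ring
    rw [key, h1, h2, sub_zero]
  -- the main claim
  have main : ∀ m, u - v ≤ m → m < b → ∀ a : ℕ → ZMod 2,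
      (fun t : Fin (hbar - δ + 1) =>
        a (iF (p / (hbar - δ + 1) * (hbar - δ + 1) + (t : ℕ)))) ∈ V₀ →
      ((∑ g ∈ Finset.range u, θ ^ (g * m) *
          (c (iF p * u + g) a - c' (iF p * u + g) a)) = 0)
      ∧ ((∑ g ∈ Finset.range u, θ ^ (g * m) *
          (c (iF p * u + g) (flipCoord a (iF p)) - c' (iF p * u + g) (flipCoord a (iF p)))) = 0)
      ∧ (∀ i, i < nbar → i ≠ iF p → i ∉ R →
          (∑ g ∈ Finset.range u, θ ^ (g * m) * (c (i * u + g) a - c' (i * u + g) a))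
          + (∑ g ∈ Finset.range u, θ ^ (g * m) *
              (c (i * u + g) (flipCoord a (iF p)) - c' (i * u + g) (flipCoord a (iF p)))) = 0) := by
    intro m hm1 hm2 a ha
    have hmu : m < u := lt_of_lt_of_le hm2 hb2
    set a' := flipCoord a (iF p) with ha'def
    set Fm : (ℕ → ZMod 2) → ℕ → 𝔽 :=
      fun b i => ∑ g ∈ Finset.range u, θ ^ (g * m) * (c (i * u + g) b - c' (i * u + g) b)
      with hFm
    have hva1 : (a (iF p)).val ≤ 1 := hval _
    have ha'ip : (a' (iF p)).val = 1 - (a (iF p)).val := by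
      rw [ha'def]
      show ((Function.update a (iF p) (a (iF p) + 1)) (iF p)).val = _
      rw [Function.update_self]
      exact hval1 _
    have ha'eq : ∀ i, i ≠ iF p → a' i = a i := by
      intro i hi
      rw [ha'def]
      exact Function.update_of_ne hi _ _
    -- multiply-summed parity equations at exponent m + s*u
    have hθg : ∀ g s : ℕ, θ ^ (g * (m + s * u)) = θ ^ (g * m) := by
      intro g s
      have hh : g * (m + s * u) = g * m + u * (g * s) := by ring
      rw [hh, pow_add]
      have h2 : θ ^ (u * (g * s)) = 1 := by rw [pow_mul, hθu, one_pow]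
      rw [h2, mul_one]
    have hE : ∀ s : ℕ, m + s * u < r → ∀ bb : ℕ → ZMod 2,
        ∑ i ∈ Finset.range nbar, (ξ ^ (2 * i + (bb i).val)) ^ (m + s * u) * Fm bb i = 0 := by
      intro s hs bb
      refine Eq.trans ?_ (hpar (m + s * u) hs bb)
      refine Finset.sum_congr rfl fun i _ => ?_
      congr 1
      refine Finset.sum_congr rfl fun g _ => ?_
      rw [hθg g s]
    -- combine the equations at a and a'
    have hsum : ∀ s : ℕ, m + s * u < r →
        (∑ i ∈ (Finset.range nbar).erase (iF p),
          (ξ ^ (2 * i + (a i).val)) ^ (m + s * u) * (Fm a i + Fm a' i))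
        + ((ξ ^ (2 * (iF p) + (a (iF p)).val)) ^ (m + s * u) * Fm a (iF p)
           + (ξ ^ (2 * (iF p) + (1 - (a (iF p)).val))) ^ (m + s * u) * Fm a' (iF p)) = 0 := by
      intro s hs
      have h1 := hE s hs a
      have h2 := hE s hs a'
      rw [← Finset.sum_erase_add _ _ hmem] at h1 h2
      have hsplit : ∑ i ∈ (Finset.range nbar).erase (iF p),
          (ξ ^ (2 * i + (a i).val)) ^ (m + s * u) * (Fm a i + Fm a' i)
          = (∑ i ∈ (Finset.range nbar).erase (iF p),
              (ξ ^ (2 * i + (a i).val)) ^ (m + s * u) * Fm a i)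
            + ∑ i ∈ (Finset.range nbar).erase (iF p),
              (ξ ^ (2 * i + (a' i).val)) ^ (m + s * u) * Fm a' i := by
        rw [← Finset.sum_add_distrib]
        refine Finset.sum_congr rfl fun i hi => ?_
        rw [ha'eq i (Finset.ne_of_mem_erase hi), mul_add]
      rw [hsplit, ← ha'ip]
      linear_combination h1 + h2
    -- drop the helper racks (their combined coefficients vanish)
    set T := ((Finset.range nbar).erase (iF p)) \ R with hT
    have hTsub : T ⊆ (Finset.range nbar).erase (iF p) := Finset.sdiff_subset
    have hipT : iF p ∉ T := fun h => (Finset.mem_erase.mp (hTsub h)).1 rfl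
    have hzeroR : ∀ i ∈ (Finset.range nbar).erase (iF p), i ∉ T → Fm a i + Fm a' i = 0 := by
      intro i hi hiT
      have hiR : i ∈ R := by
        by_contra hR'
        exact hiT (Finset.mem_sdiff.mpr ⟨hi, hR'⟩)
      have hHi := hH i hiR m hm1 hm2 a ha
      simp only [Hval2] at hHi
      rw [← ha'def] at hHi
      simp only [hFm]
      simp only [mul_sub, Finset.sum_sub_distrib]
      linear_combination hHi
    have hsumT : ∀ s : ℕ, m + s * u < r →
        (∑ i ∈ T, (ξ ^ (2 * i + (a i).val)) ^ (m + s * u) * (Fm a i + Fm a' i))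
        + ((ξ ^ (2 * (iF p) + (a (iF p)).val)) ^ (m + s * u) * Fm a (iF p)
           + (ξ ^ (2 * (iF p) + (1 - (a (iF p)).val))) ^ (m + s * u) * Fm a' (iF p)) = 0 := by
      intro s hs
      have heq : ∑ i ∈ T, (ξ ^ (2 * i + (a i).val)) ^ (m + s * u) * (Fm a i + Fm a' i)
          = ∑ i ∈ (Finset.range nbar).erase (iF p),
              (ξ ^ (2 * i + (a i).val)) ^ (m + s * u) * (Fm a i + Fm a' i) :=
        Finset.sum_subset hTsub (fun i hi hiT => by rw [hzeroR i hi hiT, mul_zero])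
      rw [heq]
      exact hsum s hs
    -- encode into a single Vandermonde system
    set enc : ℕ → ℕ := fun i => 2 * i + (a i).val with henc
    have hencInj : Function.Injective enc := by
      intro i1 i2 hi
      simp only [henc] at hi
      have := hval (a i1)
      have := hval (a i2)
      omega
    set Efin := insert (2 * (iF p) + (1 - (a (iF p)).val)) ((insert (iF p) T).image enc)
      with hEfin
    have hj0 : 2 * (iF p) + (1 - (a (iF p)).val) ∉ (insert (iF p) T).image enc := by
      intro hmemj
      obtain ⟨i, hi, hienc⟩ := Finset.mem_image.mp hmemj
      simp only [henc] at hienc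
      rcases Finset.mem_insert.mp hi with rfl | hiT
      · omega
      · have hne : i ≠ iF p := (Finset.mem_erase.mp (hTsub hiT)).1
        have := hval (a i)
        omega
    have hRsub : R ⊆ (Finset.range nbar).erase (iF p) := fun j hj =>
      Finset.mem_erase.mpr ⟨hRF j hj p hp, Finset.mem_range.mpr (hRn j hj)⟩
    have hTcard : T.card = nbar - 1 - (dbar + 1) := by
      rw [hT, Finset.card_sdiff_of_subset hRsub, Finset.card_erase_of_mem hmem, Finset.card_range, hR]
    have hEcard : Efin.card = T.card + 2 := by
      rw [hEfin, Finset.card_insert_of_notMem hj0,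
        Finset.card_image_of_injective _ hencInj, Finset.card_insert_of_notMem hipT]
    have hEbound : ∀ j ∈ Efin, j < 2 * nbar := by
      intro j hj
      rcases Finset.mem_insert.mp hj with rfl | hj'
      · omega
      · obtain ⟨i, hi, rfl⟩ := Finset.mem_image.mp hj'
        have hin : i < nbar := by
          rcases Finset.mem_insert.mp hi with rfl | hiT
          · exact hipn
          · exact Finset.mem_range.mp (Finset.mem_erase.mp (hTsub hiT)).2
        have := hval (a i)
        simp only [henc]
        omega
    have hxinj : Set.InjOn (fun j => ξ ^ (j * u)) Efin := by
      intro j1 hj1 j2 hj2 hx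
      have b1 := hEbound j1 hj1
      have b2 := hEbound j2 hj2
      have key : ∀ j : ℕ, j < 2 * nbar → j * u < orderOf ξ := by
        intro j hjb
        have h1 : (j + 1) * u ≤ 2 * nbar * u := Nat.mul_le_mul_right u (by omega)
        have h2 : (j + 1) * u = j * u + u := by ring
        have h3 : 2 * nbar * u = 2 * n := by rw [hn]; ring
        rw [hξ]
        omega
      have := pow_injOn_Iio_orderOf (x := ξ)
        (Set.mem_Iio.mpr (key j1 b1)) (Set.mem_Iio.mpr (key j2 b2)) hx
      exact Nat.eq_of_mul_eq_mul_right hu this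
    -- the coefficient function
    set cf : ℕ → 𝔽 := fun j =>
      if j = 2 * (iF p) + (a (iF p)).val then Fm a (iF p)
      else if j = 2 * (iF p) + (1 - (a (iF p)).val) then Fm a' (iF p)
      else Fm a (j / 2) + Fm a' (j / 2) with hcf
    have hcf1 : cf (2 * (iF p) + (a (iF p)).val) = Fm a (iF p) := by
      simp [hcf]
    have hne12 : 2 * (iF p) + (1 - (a (iF p)).val) ≠ 2 * (iF p) + (a (iF p)).val := by omega
    have hcf2 : cf (2 * (iF p) + (1 - (a (iF p)).val)) = Fm a' (iF p) := by
      simp only [hcf]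
      rw [if_neg hne12, if_pos trivial]
    have hcf3 : ∀ i ∈ T, cf (enc i) = Fm a i + Fm a' i := by
      intro i hiT
      have hne : i ≠ iF p := (Finset.mem_erase.mp (hTsub hiT)).1
      have hvi := hval (a i)
      have he1 : enc i ≠ 2 * (iF p) + (a (iF p)).val := by simp only [henc]; omega
      have he2 : enc i ≠ 2 * (iF p) + (1 - (a (iF p)).val) := by simp only [henc]; omega
      have he3 : enc i / 2 = i := by simp only [henc]; omega
      simp only [hcf]
      rw [if_neg he1, if_neg he2, he3]
    -- the Vandermonde system
    have hvand : ∀ s < Efin.card, ∑ j ∈ Efin, (ξ ^ (j * u)) ^ s * (ξ ^ (j * m) * cf j) = 0 := by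
      intro s hsE
      have hsr : m + s * u < r := by
        rw [hEcard, hTcard] at hsE
        have hs2 : s ≤ nbar - kbar - 2 := by omega
        have hmul : s * u ≤ (nbar - kbar - 2) * u := Nat.mul_le_mul_right u hs2
        have hA : (nbar - kbar - 2) * u + kbar * u = (nbar - 2) * u := by
          rw [← Nat.add_mul]
          congr 1
          omega
        have hB : (nbar - 2) * u + 2 * u = nbar * u := by
          rw [← Nat.add_mul]
          congr 1
          omega
        omega
      have hform : ∑ j ∈ Efin, (ξ ^ (j * u)) ^ s * (ξ ^ (j * m) * cf j)
          = ∑ j ∈ Efin, (ξ ^ j) ^ (m + s * u) * cf j := by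
        refine Finset.sum_congr rfl fun j _ => ?_
        rw [← pow_mul, ← mul_assoc, ← pow_add,
          (by ring : j * u * s + j * m = j * (m + s * u)), pow_mul]
      rw [hform, hEfin, Finset.sum_insert hj0,
        Finset.sum_image (fun x _ y _ h => hencInj h), Finset.sum_insert hipT, hcf2]
      have hencp : enc (iF p) = 2 * (iF p) + (a (iF p)).val := rfl
      rw [hencp, hcf1]
      have hTrw : ∑ i ∈ T, (ξ ^ enc i) ^ (m + s * u) * cf (enc i)
          = ∑ i ∈ T, (ξ ^ (2 * i + (a i).val)) ^ (m + s * u) * (Fm a i + Fm a' i) := by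
        refine Finset.sum_congr rfl fun i hi => ?_
        rw [hcf3 i hi]
      rw [hTrw]
      linear_combination hsumT s hsr
    have hallzero := vand_zero_finset Efin (fun j => ξ ^ (j * u)) (fun j => ξ ^ (j * m) * cf j)
      hxinj hvand
    have hcfzero : ∀ j ∈ Efin, cf j = 0 := by
      intro j hj
      have hz := hallzero j hj
      rcases mul_eq_zero.mp hz with h | h
      · exact absurd h (pow_ne_zero _ hξne)
      · exact h
    -- extract the conclusions
    have mem1 : 2 * (iF p) + (a (iF p)).val ∈ Efin := by
      rw [hEfin]
      exact Finset.mem_insert_of_mem (Finset.mem_image_of_mem enc (Finset.mem_insert_self _ _))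
    have mem2 : 2 * (iF p) + (1 - (a (iF p)).val) ∈ Efin := Finset.mem_insert_self _ _
    have r1 : Fm a (iF p) = 0 := by rw [← hcf1]; exact hcfzero _ mem1
    have r2 : Fm a' (iF p) = 0 := by rw [← hcf2]; exact hcfzero _ mem2
    refine ⟨r1, r2, ?_⟩
    intro i hin hne hnR
    have hiT : i ∈ T := Finset.mem_sdiff.mpr
      ⟨Finset.mem_erase.mpr ⟨hne, Finset.mem_range.mpr hin⟩, hnR⟩
    have memi : enc i ∈ Efin := by
      rw [hEfin]
      exact Finset.mem_insert_of_mem (Finset.mem_image_of_mem enc (Finset.mem_insert_of_mem hiT))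
    have := hcfzero _ memi
    rw [hcf3 i hiT] at this
    exact this
  constructor
  · intro m hm1 hm2 a ha
    obtain ⟨r1, r2, -⟩ := main m hm1 hm2 a ha
    constructor
    · rw [← sub_eq_zero, ← Finset.sum_sub_distrib]
      simpa only [mul_sub] using r1
    · rw [← sub_eq_zero, ← Finset.sum_sub_distrib]
      simpa only [mul_sub] using r2
  · intro q hq hqp m hm1 hm2 a ha
    obtain ⟨-, -, r3⟩ := main m hm1 hm2 a ha
    have hne : iF q ≠ iF p := by
      intro h
      exact hqp (hiF.injOn (Set.mem_Iio.mpr hq) (Set.mem_Iio.mpr hp) h)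
    have hnR : iF q ∉ R := fun h => hRF (iF q) h q hq rfl
    have h3 := r3 (iF q) (hiFn q hq) hne hnR
    simp only [mul_sub, Finset.sum_sub_distrib] at h3
    simp only [Hval2]
    linear_combination h3
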